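/- Let σ be an involutive automorphism of the Lie algebra L satisfying σ(H) = −H, and let L^σ = {v ∈ L : σ(v) = v} be its fixed-point subalgebra. Then L = L^σ + Z_L(X) + [X, g_{−2}] (sum of vector subspaces of L). -/

import Mathlib

/-- If `σ` is an involutive automorphism of `L` with
`σ(H) = −H`, and `L^σ` its fixed-point subalgebra, then
`L = L^σ + Z_L(X) + [X, g_{−2}]` (sum of vector subspaces of `L`). -/
theorem stmt_16 {L : Type*} [LieRing L] [LieAlgebra ℝ L]
    [Module.Finite ℝ L] [LieAlgebra.IsSemisimple ℝ L]
    (X H Y : L)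
    (hHX : ⁅H, X⁆ = (2 : ℝ) • X) (hHY : ⁅H, Y⁆ = (-2 : ℝ) • Y)
    (hXY : ⁅X, Y⁆ = H)
    (g : ℤ → Submodule ℝ L)
    (hg : ∀ j : ℤ, g j = Module.End.eigenspace (LieAlgebra.ad ℝ L H) (j : ℝ))
    (hspan : g (-2) ⊔ g (-1) ⊔ g 0 ⊔ g 1 ⊔ g 2 = ⊤)
    (σ : L →ₗ⁅ℝ⁆ L) (hinv : ∀ v : L, σ (σ v) = v) (hσH : σ H = -H) :
    ∀ v : L, ∃ a c d : L,
      σ a = a ∧ ⁅X, c⁆ = 0 ∧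
      d ∈ Submodule.map (LieAlgebra.ad ℝ L X) (g (-2)) ∧
      v = a + c + d := by
  intro v
  set D : Module.End ℝ L := LieAlgebra.ad ℝ L H with hD
  have hmem : ∀ (r : ℝ) (w : L), w ∈ Module.End.eigenspace D r ↔ ⁅H, w⁆ = r • w := by
    intro r w
    rw [Module.End.mem_eigenspace_iff]
    simp [hD, LieAlgebra.ad_apply]
  -- eigenspaces for eigenvalues other than -2,...,2 are trivial
  have hzero : ∀ r : ℝ, r ≠ -2 → r ≠ -1 → r ≠ 0 → r ≠ 1 → r ≠ 2 →
      ∀ w : L, ⁅H, w⁆ = r • w → w = 0 := by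
    intro r h2 h1 h0 h1' h2' w hw
    have hind := (Module.End.eigenspaces_iSupIndep D) r
    have hle : (⊤ : Submodule ℝ L) ≤ ⨆ j, ⨆ (_ : j ≠ r), Module.End.eigenspace D j := by
      rw [← hspan]
      have hh : ∀ j : ℤ, (j : ℝ) ≠ r →
          g j ≤ ⨆ j, ⨆ (_ : j ≠ r), Module.End.eigenspace D j := by
        intro j hj
        rw [hg j]
        exact le_iSup₂ (f := fun (j : ℝ) (_ : j ≠ r) => Module.End.eigenspace D j) (j : ℝ) hj
      refine sup_le (sup_le (sup_le (sup_le ?_ ?_) ?_) ?_) ?_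
      · exact hh (-2) (by push_cast; exact fun h => h2 h.symm)
      · exact hh (-1) (by push_cast; exact fun h => h1 h.symm)
      · exact hh 0 (by push_cast; exact fun h => h0 h.symm)
      · exact hh 1 (by push_cast; exact fun h => h1' h.symm)
      · exact hh 2 (by push_cast; exact fun h => h2' h.symm)
    have htop : (⨆ j, ⨆ (_ : j ≠ r), Module.End.eigenspace D j) = ⊤ :=
      top_le_iff.mp hle
    rw [htop, disjoint_top] at hind
    have hmw : w ∈ Module.End.eigenspace D r := (hmem r w).mpr hw
    rw [hind] at hmw
    simpa using hmw
  -- sigma flips eigenvalues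
  have hflip : ∀ (r : ℝ) (w : L), ⁅H, w⁆ = r • w → ⁅H, σ w⁆ = (-r) • σ w := by
    intro r w hw
    have h1 : σ ⁅H, w⁆ = ⁅σ H, σ w⁆ := σ.map_lie H w
    rw [hw, hσH, neg_lie, map_smul σ] at h1
    rw [neg_smul, h1, neg_neg]
  -- the three subspaces
  set F : Submodule ℝ L := LinearMap.ker ((σ : L →ₗ[ℝ] L) - LinearMap.id) with hF
  have hFmem : ∀ w : L, w ∈ F ↔ σ w = w := by
    intro w
    rw [hF, LinearMap.mem_ker, LinearMap.sub_apply, LinearMap.id_apply, sub_eq_zero,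
      LieHom.coe_toLinearMap]
  set K : Submodule ℝ L := LinearMap.ker (LieAlgebra.ad ℝ L X) with hK
  have hKmem : ∀ w : L, w ∈ K ↔ ⁅X, w⁆ = 0 := by
    intro w
    rw [hK, LinearMap.mem_ker]
    simp [LieAlgebra.ad_apply]
  set M : Submodule ℝ L := Submodule.map (LieAlgebra.ad ℝ L X) (g (-2)) with hM
  set S : Submodule ℝ L := F ⊔ K ⊔ M with hS
  have hFS : F ≤ S := le_sup_of_le_left le_sup_left
  have hKS : K ≤ S := le_sup_of_le_left le_sup_right
  have hMS : M ≤ S := le_sup_right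
  -- pieces of positive weight are killed by ad X
  have hpos : ∀ (r : ℝ), r = 1 ∨ r = 2 → ∀ w : L, ⁅H, w⁆ = r • w → ⁅X, w⁆ = 0 := by
    intro r hr w hw
    have hXw : ⁅H, ⁅X, w⁆⁆ = (r + 2) • ⁅X, w⁆ := by
      rw [leibniz_lie, hHX, hw, smul_lie, lie_smul]
      module
    rcases hr with rfl | rfl
    · exact hzero 3 (by norm_num) (by norm_num) (by norm_num) (by norm_num) (by norm_num)
        ⁅X, w⁆ (by rw [hXw]; norm_num)
    · exact hzero 4 (by norm_num) (by norm_num) (by norm_num) (by norm_num) (by norm_num)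
        ⁅X, w⁆ (by rw [hXw]; norm_num)
  -- negative pieces: w = (w + σ w) - σ w with σ w of positive weight
  have hneg : ∀ (r : ℝ), r = 1 ∨ r = 2 → ∀ w : L, ⁅H, w⁆ = (-r) • w → w ∈ S := by
    intro r hr w hw
    have hσw : ⁅H, σ w⁆ = r • σ w := by
      have := hflip (-r) w hw
      rwa [neg_neg] at this
    have h1 : (w + σ w) ∈ F := by
      rw [hFmem]
      rw [map_add σ, hinv, add_comm]
    have h2 : σ w ∈ K := (hKmem _).mpr (hpos r hr (σ w) hσw)
    have : w = (w + σ w) + (-(σ w)) := by abel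
    rw [this]
    exact S.add_mem (hFS h1) (S.neg_mem (hKS h2))
  -- zero piece
  have hzeroS : ∀ w : L, ⁅H, w⁆ = 0 → w ∈ S := by
    intro w hw
    set a : L := (1/2 : ℝ) • (w + σ w) with ha
    set b : L := (1/2 : ℝ) • (w - σ w) with hb
    have hσw0 : ⁅H, σ w⁆ = 0 := by
      have := hflip 0 w (by rw [hw, zero_smul])
      rwa [neg_zero, zero_smul] at this
    have haF : a ∈ F := by
      rw [hFmem, ha, map_smul σ, map_add σ, hinv, add_comm (σ w) w]
    have hb0 : ⁅H, b⁆ = 0 := by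
      rw [hb, lie_smul, lie_sub, hw, hσw0, sub_zero, smul_zero]
    -- z = [X, b] has weight 2
    set z : L := ⁅X, b⁆ with hz
    have hz2 : ⁅H, z⁆ = (2 : ℝ) • z := by
      rw [hz, leibniz_lie, hHX, hb0, lie_zero, add_zero, smul_lie]
    have hXz : ⁅X, z⁆ = 0 := hpos 2 (Or.inr rfl) z hz2
    -- Yz has weight 0
    have hYz : ⁅H, ⁅Y, z⁆⁆ = 0 := by
      rw [leibniz_lie, hHY, hz2, smul_lie, lie_smul]
      module
    -- YYz has weight -2
    have hYYz : ⁅H, ⁅Y, ⁅Y, z⁆⁆⁆ = (-2 : ℝ) • ⁅Y, ⁅Y, z⁆⁆ := by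
      rw [leibniz_lie, hHY, hYz, lie_zero, add_zero, smul_lie]
    -- X Y z = 2 z
    have hXYz : ⁅X, ⁅Y, z⁆⁆ = (2 : ℝ) • z := by
      rw [leibniz_lie, hXY, hz2, hXz, lie_zero, add_zero]
    -- X Y Y z = 2 Y z
    have hXYYz : ⁅X, ⁅Y, ⁅Y, z⁆⁆⁆ = (2 : ℝ) • ⁅Y, z⁆ := by
      rw [leibniz_lie, hXY, hYz, hXYz, lie_smul, zero_add]
    -- u = (1/4) YYz ∈ g(-2), and [X,[X,u]] = z
    set u : L := (1/4 : ℝ) • ⁅Y, ⁅Y, z⁆⁆ with hu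
    have hum : u ∈ g (-2) := by
      rw [hg, hmem]
      rw [hu, lie_smul, hYYz]
      push_cast
      module
    have hXXu : ⁅X, ⁅X, u⁆⁆ = z := by
      simp only [hu, lie_smul, hXYYz, hXYz]
      module
    have hdM : ⁅X, u⁆ ∈ M := ⟨u, hum, by simp [LieAlgebra.ad_apply]⟩
    have hcK : b - ⁅X, u⁆ ∈ K := by
      rw [hKmem, lie_sub, hXXu, ← hz, sub_self]
    have hwab : w = a + (b - ⁅X, u⁆) + ⁅X, u⁆ := by
      rw [ha, hb]
      module
    rw [hwab]
    exact S.add_mem (S.add_mem (hFS haF) (hKS hcK)) (hMS hdM)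
  -- all pieces in S
  have hgS : ∀ j : ℤ, j = -2 ∨ j = -1 ∨ j = 0 ∨ j = 1 ∨ j = 2 → g j ≤ S := by
    intro j hj w hw
    rw [hg, hmem] at hw
    rcases hj with rfl | rfl | rfl | rfl | rfl
    · exact hneg 2 (Or.inr rfl) w (by exact_mod_cast hw)
    · exact hneg 1 (Or.inl rfl) w (by exact_mod_cast hw)
    · exact hzeroS w (by rw [hw]; norm_num)
    · exact hKS ((hKmem w).mpr (hpos 1 (Or.inl rfl) w (by exact_mod_cast hw)))
    · exact hKS ((hKmem w).mpr (hpos 2 (Or.inr rfl) w (by exact_mod_cast hw)))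
  have hvS : v ∈ S := by
    have : (⊤ : Submodule ℝ L) ≤ S := by
      rw [← hspan]
      refine sup_le (sup_le (sup_le (sup_le ?_ ?_) ?_) ?_) ?_
      · exact hgS (-2) (by norm_num)
      · exact hgS (-1) (by norm_num)
      · exact hgS 0 (by norm_num)
      · exact hgS 1 (by norm_num)
      · exact hgS 2 (by norm_num)
    exact this trivial
  rw [hS, Submodule.mem_sup] at hvS
  obtain ⟨y, hy, d, hd, hv⟩ := hvS
  rw [Submodule.mem_sup] at hy
  obtain ⟨a, haF, c, hcK, hy⟩ := hy
  exact ⟨a, c, d, (hFmem a).mp haF, (hKmem c).mp hcK, hd,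
    by rw [← hv, ← hy]⟩
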